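/- The subgroup U of K₂^M(ℝ) generated by symbols {a, b} with a, b > 0 is divisible: every element of U is n-divisible within U for every n ≥ 1. -/

import Mathlib

open scoped TensorProduct

/-- The subgroup of Steinberg relations in `k^× ⊗ k^×`. -/
noncomputable def steinbergSubgroup (k : Type*) [Field k] :
    AddSubgroup (Additive kˣ ⊗[ℤ] Additive kˣ) :=
  AddSubgroup.closure
    {x | ∃ (a : kˣ) (h : (1 : k) - (a : k) ≠ 0),
      x = Additive.ofMul a ⊗ₜ Additive.ofMul (Units.mk0 ((1 : k) - a) h)}

/-- The second Milnor K-group `K₂^M(k)`. -/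
noncomputable def MilnorK2 (k : Type*) [Field k] :=
  (Additive kˣ ⊗[ℤ] Additive kˣ) ⧸ steinbergSubgroup k

noncomputable instance (k : Type*) [Field k] : AddCommGroup (MilnorK2 k) :=
  QuotientAddGroup.Quotient.addCommGroup _

/-- The Milnor symbol `{a, b}` in `K₂^M(k)`. -/
noncomputable def milnorSymbol {k : Type*} [Field k] (a b : kˣ) : MilnorK2 k :=
  QuotientAddGroup.mk (Additive.ofMul a ⊗ₜ Additive.ofMul b)


lemma milnorSymbol_nsmul_root (c d : ℝˣ) (hc : (0:ℝ) < c) (n : ℕ) (hn : 1 ≤ n) :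
    ∃ e : ℝˣ, (0:ℝ) < e ∧ (n : ℤ) • milnorSymbol e d = milnorSymbol c d := by
  have hr : (0:ℝ) < (c:ℝ) ^ ((n:ℝ)⁻¹) := Real.rpow_pos_of_pos hc _
  have hrn : ((c:ℝ) ^ ((n:ℝ)⁻¹)) ^ n = (c:ℝ) :=
    Real.rpow_inv_natCast_pow hc.le (by omega)
  refine ⟨Units.mk0 _ hr.ne', hr, ?_⟩
  have hu : (Units.mk0 ((c:ℝ) ^ ((n:ℝ)⁻¹)) hr.ne') ^ n = c := by
    exact Units.ext (by simpa using hrn)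
  have ht : (n : ℤ) • ((Additive.ofMul (Units.mk0 ((c:ℝ) ^ ((n:ℝ)⁻¹)) hr.ne')) ⊗ₜ[ℤ]
      Additive.ofMul d) = (Additive.ofMul c) ⊗ₜ[ℤ] (Additive.ofMul d) := by
    have h2 : (n : ℤ) • Additive.ofMul (Units.mk0 ((c:ℝ) ^ ((n:ℝ)⁻¹)) hr.ne')
        = Additive.ofMul c := by rw [← ofMul_zpow, zpow_natCast, hu]
    rw [TensorProduct.smul_tmul', h2]
  calc (n : ℤ) • milnorSymbol (Units.mk0 ((c:ℝ) ^ ((n:ℝ)⁻¹)) hr.ne') d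
      = (show MilnorK2 ℝ from QuotientAddGroup.mk ((n : ℤ) • ((Additive.ofMul (Units.mk0 ((c:ℝ) ^ ((n:ℝ)⁻¹)) hr.ne')) ⊗ₜ[ℤ] Additive.ofMul d))) :=
        (map_zsmul (QuotientAddGroup.mk' (steinbergSubgroup ℝ)) _ _).symm
    _ = milnorSymbol c d := by rw [ht]; rfl

/-- The subgroup `U` of `K₂^M(ℝ)` generated by symbols with both entries
positive is divisible. -/
theorem milnorK2_pos_subgroup_divisible :
    ∀ x ∈ AddSubgroup.closure
      {x : MilnorK2 ℝ | ∃ c d : ℝˣ, (0 : ℝ) < c ∧ (0 : ℝ) < d ∧ x = milnorSymbol c d},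
      ∀ n : ℕ, 1 ≤ n →
        ∃ y ∈ AddSubgroup.closure
          {x : MilnorK2 ℝ | ∃ c d : ℝˣ, (0 : ℝ) < c ∧ (0 : ℝ) < d ∧ x = milnorSymbol c d},
          n • y = x := by
  intro x hx n hn
  set S := AddSubgroup.closure
    {x : MilnorK2 ℝ | ∃ c d : ℝˣ, (0 : ℝ) < c ∧ (0 : ℝ) < d ∧ x = milnorSymbol c d} with hS
  have hle : S ≤ AddSubgroup.map (zsmulAddGroupHom (n : ℤ)) S := by
    rw [hS, AddSubgroup.closure_le]
    rintro g ⟨c, d, hc, hd, rfl⟩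
    obtain ⟨e, he, heq⟩ := milnorSymbol_nsmul_root c d hc n hn
    exact ⟨milnorSymbol e d, AddSubgroup.subset_closure ⟨e, d, he, hd, rfl⟩, heq⟩
  obtain ⟨y, hy, hyx⟩ := hle hx
  refine ⟨y, hy, ?_⟩
  rw [← hyx]
  simp [zsmulAddGroupHom_apply, natCast_zsmul]
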